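/- arXiv:0911.2233 — 5 statements merged into one kernel-verified Lean document; each statement's English description precedes it below -/
import Mathlib

section
/- Let θ be an antimorphic involution over Σ and let Σ' ⊆ Idt(θ) ∪ Trn(θ). If an infinite word w over Σ' is abelian-kth-power-free, then w is pseudo-kth-power-free with respect to θ. -/
/-- If `S ⊆ Idt(θ) ∪ Trn(θ)` and the infinite word `w` over `S` is
abelian-`k`th-power-free, then `w` is pseudo-`k`th-power-free w.r.t. `θ`. -/
theorem abelianPowerFree_implies_pseudoPowerFree {α : Type*} [LinearOrder α]
    [DecidableEq α]
    (θ : List α → List α)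
    (hanti : ∀ u v : List α, θ (u ++ v) = θ v ++ θ u)
    (hinv : ∀ w : List α, θ (θ w) = w)
    (f : α → α) (hf : ∀ a : α, θ [a] = [f a])
    (S : Set α) (hS : ∀ a ∈ S, a ≤ f a)
    (k : ℕ) (hk : 2 ≤ k)
    (w : ℕ → α) (hw : ∀ n, w n ∈ S)
    (hfree : ∀ (i : ℕ) (us : List (List α)), us.length = k →
      (∀ v ∈ us, v ≠ []) →
      (∀ v₁ ∈ us, ∀ v₂ ∈ us, ∀ a : α, v₁.count a = v₂.count a) →
      us.flatten ≠ (List.range us.flatten.length).map fun j => w (i + j)) :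
    ¬ ∃ (i : ℕ) (us : List (List α)) (u : List α), us.length = k ∧ u ≠ [] ∧
        (∀ v ∈ us, v = u ∨ v = θ u) ∧
        us.flatten = (List.range us.flatten.length).map fun j => w (i + j) := by
  rintro ⟨i, us, u, hlen, hu, hvs, heq⟩
  have h0 : θ ([] : List α) = [] := by
    have h := hanti [] []
    simp only [List.append_nil] at h
    have hl := congrArg List.length h
    rw [List.length_append] at hl
    have : (θ ([] : List α)).length = 0 := by omega
    exact List.eq_nil_of_length_eq_zero this
  have hθ : ∀ v : List α, θ v = (v.map f).reverse := by
    intro v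
    induction v with
    | nil => simpa using h0
    | cons a t ih =>
      have h := hanti [a] t
      rw [List.singleton_append, hf] at h
      rw [h, ih]
      simp
  have hff : ∀ a : α, f (f a) = a := by
    intro a
    have h := hinv [a]
    rw [hf, hf] at h
    simpa using h
  have hmem : ∀ a ∈ us.flatten, a ∈ S := by
    intro a ha
    rw [heq] at ha
    simp only [List.mem_map, List.mem_range] at ha
    obtain ⟨j, _, rfl⟩ := ha
    exact hw _
  refine hfree i us hlen ?_ ?_ heq
  · intro v hv
    rcases hvs v hv with rfl | rfl
    · exact hu
    · rw [hθ]
      simpa using hu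
  · intro v₁ h₁ v₂ h₂ a
    by_cases h1 : u ∈ us
    · by_cases h2 : θ u ∈ us
      · have hfix : ∀ b ∈ u, f b = b := by
          intro b hb
          have hbS : b ∈ S := hmem b (List.mem_flatten.mpr ⟨u, h1, hb⟩)
          have hfbS : f b ∈ S := by
            apply hmem
            refine List.mem_flatten.mpr ⟨θ u, h2, ?_⟩
            rw [hθ]
            simp only [List.mem_reverse, List.mem_map]
            exact ⟨b, hb, rfl⟩
          have h3 := hS b hbS
          have h4 := hS (f b) hfbS
          rw [hff] at h4
          exact le_antisymm h4 h3
        have hmap : u.map f = u := by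
          conv_rhs => rw [← List.map_id u]
          exact List.map_congr_left hfix
        have hθu : θ u = u.reverse := by rw [hθ, hmap]
        have key : ∀ v ∈ us, v.count a = u.count a := by
          intro v hv
          rcases hvs v hv with rfl | rfl
          · rfl
          · rw [hθu, List.count_reverse]
        rw [key v₁ h₁, key v₂ h₂]
      · rcases hvs v₁ h₁ with rfl | rfl
        · rcases hvs v₂ h₂ with rfl | rfl
          · rfl
          · exact absurd h₂ h2
        · exact absurd h₁ h2
    · rcases hvs v₁ h₁ with rfl | rfl
      · exact absurd h₁ h1
      · rcases hvs v₂ h₂ with rfl | rfl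
        · exact absurd h₂ h1
        · rfl
end

section
/- There is no pseudo-square-free infinite word over the 3-letter alphabet {0,1,2} with respect to the antimorphic involution θ = (0,1)·Mir (i.e., θ swaps 0 and 1, fixes 2, and reverses words). Equivalently, every word over {0,1,2} of length at least 8 contains a pseudo-square with respect to θ. -/
def fθ : Fin 3 → Fin 3 := ![1, 0, 2]

def hasPS (w : List (Fin 3)) : Bool :=
  (List.range w.length).any fun i =>
    (List.range 5).any fun L =>
      decide (1 ≤ L) && decide (i + L + L ≤ w.length) &&
        (let u := (w.drop i).take L
         let v := (w.drop (i + L)).take L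
         (decide (v = u) || decide (v = (u.map fθ).reverse)))

lemma bridge {w : List (Fin 3)} (h : hasPS w = true) :
    ∃ u : List (Fin 3), u ≠ [] ∧ ((u ++ u) <:+: w ∨ (u ++ (u.map fθ).reverse) <:+: w) := by
  simp only [hasPS, List.any_eq_true, List.mem_range, Bool.and_eq_true, Bool.or_eq_true,
    decide_eq_true_iff] at h
  obtain ⟨i, hi, L, -, ⟨hL, hlen⟩, hor⟩ := h
  set u := (w.drop i).take L with hu
  set v := (w.drop (i + L)).take L with hv
  have hdrop : (w.drop i).drop L = w.drop (i + L) := by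
    simp [List.drop_drop, Nat.add_comm]
  have happ : u ++ v = (w.drop i).take (L + L) := by
    rw [List.take_add, hdrop]
  have hinf : (w.drop i).take (L + L) <:+: w :=
    ((w.drop i).take_prefix (L + L)).isInfix.trans (w.drop_suffix i).isInfix
  have hne : u ≠ [] := by
    intro hnil
    have := congrArg List.length hnil
    simp only [hu, List.length_take, List.length_drop, List.length_nil] at this
    omega
  rcases hor with h1 | h2
  · exact ⟨u, hne, Or.inl (by rw [h1] at happ; rw [happ]; exact hinf)⟩
  · exact ⟨u, hne, Or.inr (by rw [h2] at happ; rw [happ]; exact hinf)⟩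

set_option maxHeartbeats 4000000 in
lemma key : ∀ a b c d e f g h : Fin 3, hasPS [a, b, c, d, e, f, g, h] = true := by decide

lemma len8 (v : List (Fin 3)) (hv : v.length = 8) : hasPS v = true := by
  rcases v with _ | ⟨a, v⟩; · simp at hv
  rcases v with _ | ⟨b, v⟩; · simp at hv
  rcases v with _ | ⟨c, v⟩; · simp at hv
  rcases v with _ | ⟨d, v⟩; · simp at hv
  rcases v with _ | ⟨e, v⟩; · simp at hv
  rcases v with _ | ⟨f, v⟩; · simp at hv
  rcases v with _ | ⟨g, v⟩; · simp at hv
  rcases v with _ | ⟨h, v⟩; · simp at hv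
  have : v = [] := by
    simp only [List.length_cons] at hv
    exact List.length_eq_zero_iff.mp (by omega)
  subst this
  exact key a b c d e f g h

/-- Every word over `{0,1,2}` of length at least 8 contains a pseudo-square
with respect to `θ = (0,1)·Mir`. -/
theorem no_pseudoSquareFree_word_three_letters_transposition
    (f : Fin 3 → Fin 3) (hf0 : f 0 = 1) (hf1 : f 1 = 0) (hf2 : f 2 = 2)
    (θ : List (Fin 3) → List (Fin 3)) (hθ : ∀ v, θ v = (v.map f).reverse)
    (w : List (Fin 3)) (hw : 8 ≤ w.length) :
    ∃ u : List (Fin 3), u ≠ [] ∧ ((u ++ u) <:+: w ∨ (u ++ θ u) <:+: w) := by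
  have hff : f = fθ := by
    funext x
    fin_cases x <;> simp [hf0, hf1, hf2, fθ]
  have hp : (w.take 8).length = 8 := by
    simp [List.length_take, Nat.min_eq_left hw]
  obtain ⟨u, hu, hor⟩ := bridge (len8 _ hp)
  have hinf : w.take 8 <:+: w := (w.take_prefix 8).isInfix
  refine ⟨u, hu, ?_⟩
  rcases hor with h1 | h2
  · exact Or.inl (h1.trans hinf)
  · exact Or.inr (by rw [hθ, hff]; exact h2.trans hinf)
end

section
/- Every word over the binary alphabet {0,1} of length at least 10 contains a pseudo-cube with respect to the mirror image. Equivalently, there is no pseudo-cube-free infinite word over {0,1} w.r.t. Mir. -/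
def hasPC (v : List Bool) : Bool :=
  (List.range (v.length + 1)).any fun i =>
    (List.range (v.length + 1)).any fun n =>
      decide (1 ≤ n) && decide (i + 3*n ≤ v.length) &&
      (let b1 := (v.drop i).take n
       let b2 := (v.drop (i+n)).take n
       let b3 := (v.drop (i+2*n)).take n
       ((b2 = b1 : Bool) || (b2 = b1.reverse : Bool)) &&
       ((b3 = b1 : Bool) || (b3 = b1.reverse : Bool)))

def allLists : ℕ → List (List Bool)
  | 0 => [[]]
  | n+1 => (allLists n).flatMap (fun v => [false :: v, true :: v])

lemma mem_allLists : ∀ (n : ℕ) (v : List Bool), v.length = n → v ∈ allLists n := by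
  intro n
  induction n with
  | zero => intro v h; simp [List.length_eq_zero_iff.mp h, allLists]
  | succ n ih =>
      intro v h
      cases v with
      | nil => simp at h
      | cons a t =>
          simp only [List.length_cons, Nat.add_right_cancel_iff] at h
          have ht := ih t h
          cases a <;>
            · rw [allLists, List.mem_flatMap]
              exact ⟨t, ht, by simp⟩

set_option maxRecDepth 10000 in
lemma allLists10 : (allLists 10).all hasPC = true := by decide

lemma hasPC_spec (v : List Bool) (h : hasPC v = true) :
    ∃ u u₁ u₂ u₃ : List Bool, u ≠ [] ∧
      (u₁ = u ∨ u₁ = u.reverse) ∧ (u₂ = u ∨ u₂ = u.reverse) ∧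
      (u₃ = u ∨ u₃ = u.reverse) ∧ (u₁ ++ u₂ ++ u₃) <:+: v := by
  unfold hasPC at h
  rw [List.any_eq_true] at h
  obtain ⟨i, -, h⟩ := h
  rw [List.any_eq_true] at h
  obtain ⟨n, -, h⟩ := h
  simp only [Bool.and_eq_true, Bool.or_eq_true, decide_eq_true_eq] at h
  obtain ⟨⟨hn, hlen⟩, h2, h3⟩ := h
  set b1 := (v.drop i).take n with hb1
  set b2 := (v.drop (i+n)).take n with hb2
  set b3 := (v.drop (i+2*n)).take n with hb3
  refine ⟨b1, b1, b2, b3, ?_, Or.inl rfl, ?_, ?_, ?_⟩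
  · intro hnil
    have : b1.length = 0 := by rw [hnil]; rfl
    rw [hb1, List.length_take, List.length_drop] at this
    omega
  · rcases h2 with h | h <;> [exact Or.inl h; exact Or.inr h]
  · rcases h3 with h | h <;> [exact Or.inl h; exact Or.inr h]
  · have key : b1 ++ b2 ++ b3 = (v.drop i).take (3*n) := by
      rw [hb1, hb2, hb3]
      have e1 : v.drop (i+n) = (v.drop i).drop n := by
        rw [List.drop_drop]
      have e2 : v.drop (i+2*n) = ((v.drop i).drop n).drop n := by
        rw [List.drop_drop, List.drop_drop]; ring_nf
      rw [e1, e2]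
      have : 3*n = n + (n + n) := by ring
      rw [this, List.take_add, List.take_add]
      simp [List.append_assoc]
    rw [key]
    exact ((v.drop i).take_prefix (3*n)).isInfix.trans (v.drop_suffix i).isInfix

/-- Every binary word of length at least 10 contains a pseudo-cube with respect
to the mirror image. -/
theorem binary_length_ten_contains_pseudoCube_mirror
    (w : List Bool) (hw : 10 ≤ w.length) :
    ∃ u u₁ u₂ u₃ : List Bool, u ≠ [] ∧
      (u₁ = u ∨ u₁ = u.reverse) ∧ (u₂ = u ∨ u₂ = u.reverse) ∧
      (u₃ = u ∨ u₃ = u.reverse) ∧ (u₁ ++ u₂ ++ u₃) <:+: w := by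
  have hp : (w.take 10).length = 10 := by
    rw [List.length_take]; omega
  have hmem := mem_allLists 10 (w.take 10) hp
  have hall := List.all_eq_true.mp allLists10 _ hmem
  obtain ⟨u, u₁, u₂, u₃, h0, h1, h2, h3, h4⟩ := hasPC_spec _ hall
  exact ⟨u, u₁, u₂, u₃, h0, h1, h2, h3, h4.trans (w.take_prefix 10).isInfix⟩
end

section
/- Let z be the infinite word over {0,1,2} obtained from the Thue–Morse sequence by inserting the letter 2 between every two consecutive letters (z = t₀ 2 t₁ 2 t₂ 2 ⋯ where t is the Thue–Morse sequence). Then z is pseudo-cube-free with respect to the antimorphic involution θ = (0,1)·Mir. -/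
def tmw (n : ℕ) : Bool := (Nat.digits 2 n).count 1 % 2 == 1

lemma tmw_two_mul (n : ℕ) : tmw (2*n) = tmw n := by
  rcases Nat.eq_zero_or_pos n with h | h
  · simp [h]
  · unfold tmw
    rw [Nat.digits_def' (by norm_num : 1 < 2) (by omega)]
    simp [Nat.mul_div_cancel_left _ (by norm_num : 0 < 2), Nat.mul_mod_right]

lemma tmw_two_mul_add_one (n : ℕ) : tmw (2*n+1) = !tmw n := by
  unfold tmw
  rw [Nat.digits_def' (by norm_num : 1 < 2) (by omega)]
  have h1 : (2*n+1) % 2 = 1 := by omega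
  have h2 : (2*n+1) / 2 = n := by omega
  rw [h1, h2, List.count_cons_self]
  rcases Nat.mod_two_eq_zero_or_one ((Nat.digits 2 n).count 1) with h | h <;>
    simp [h, Nat.add_mod]

lemma tmw_even_ne (a : ℕ) : tmw (2*a) ≠ tmw (2*a+1) := by
  rw [tmw_two_mul, tmw_two_mul_add_one]
  cases tmw a <;> simp

lemma tmw_eq_succ_odd {n : ℕ} (h : tmw n = tmw (n+1)) : n % 2 = 1 := by
  rcases Nat.even_or_odd n with ⟨a, ha⟩ | ⟨a, ha⟩
  · exact absurd (by rw [show 2*a = n by omega]; exact h)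
      (tmw_even_ne a)
  · omega

lemma tmw_odd_pair (a : ℕ) : (tmw (2*a+1) = tmw (2*a+2)) ↔ ¬ (tmw a = tmw (a+1)) := by
  have h2 : (2*a+2) = 2*(a+1) := by ring
  rw [tmw_two_mul_add_one, h2, tmw_two_mul]
  cases tmw a <;> cases tmw (a+1) <;> simp

theorem tmw_no_overlap : ∀ p, 1 ≤ p → ∀ m, ¬ (∀ j ≤ p, tmw (m+j) = tmw (m+j+p)) := by
  intro p
  induction p using Nat.strong_induction_on with
  | _ p IH =>
    intro hp m h
    have h' : ∀ x, m ≤ x → x ≤ m+p → tmw x = tmw (x+p) := by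
      intro x h1 h2
      have := h (x-m) (by omega)
      rwa [show m+(x-m) = x by omega] at this
    rcases Nat.even_or_odd p with ⟨q, hq⟩ | ⟨c, hc⟩
    · -- p even, p = 2q
      have hq' : p = 2*q := by omega
      have hq1 : 1 ≤ q := by omega
      rcases Nat.even_or_odd m with ⟨d, hd⟩ | ⟨d, hd⟩
      · apply IH q (by omega) hq1 d
        intro j hj
        have e1 : tmw (d+j) = tmw (m+2*j) := by
          rw [show m+2*j = 2*(d+j) by omega, tmw_two_mul]
        have e2 : tmw (d+j+q) = tmw (m+2*j+p) := by
          rw [show m+2*j+p = 2*(d+j+q) by omega, tmw_two_mul]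
        rw [e1, e2, ← h (2*j) (by omega)]
      · apply IH q (by omega) hq1 d
        intro j hj
        have e1 : tmw (m+2*j) = !tmw (d+j) := by
          rw [show m+2*j = 2*(d+j)+1 by omega, tmw_two_mul_add_one]
        have e2 : tmw (m+2*j+p) = !tmw (d+j+q) := by
          rw [show m+2*j+p = 2*(d+j+q)+1 by omega, tmw_two_mul_add_one]
        have := h (2*j) (by omega)
        rw [e1, e2] at this
        exact Bool.not_inj this
    · -- p odd, p = 2c+1
      rcases eq_or_lt_of_le hp with h1 | h3
      · -- p = 1
        have ha := h 0 (by omega)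
        have hb := h 1 (by omega)
        rw [← h1] at ha hb
        simp only [Nat.add_zero] at ha
        have o1 := tmw_eq_succ_odd ha
        have o2 := tmw_eq_succ_odd (by rw [show m+1+1 = m+2 by omega] at hb; exact hb)
        omega
      · have hp3 : 3 ≤ p := by omega
        have D : ∀ n, m ≤ n → n ≤ m+2*p-1 → tmw n ≠ tmw (n+1) := by
          intro n hn1 hn2 hD
          rcases Nat.even_or_odd n with ⟨a, ha⟩ | ⟨a, ha⟩
          · exact tmw_even_ne a
              (by rw [show 2*a = n by omega]; exact hD)
          · by_cases hle : n ≤ m+p-1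
            · have e1 := h' n hn1 (by omega)
              have e2 := h' (n+1) (by omega) (by omega)
              have hx : tmw (n+p) = tmw (n+p+1) := by
                rw [show n+p+1 = n+1+p by omega, ← e1, ← e2]; exact hD
              exact tmw_even_ne (a+c+1)
                (by rw [show 2*(a+c+1) = n+p by omega]; exact hx)
            · have e1 := h' (n-p) (by omega) (by omega)
              have e2 := h' (n-p+1) (by omega) (by omega)
              have hx : tmw (n-p) = tmw (n-p+1) := by
                rw [e1, e2, show n-p+p = n by omega, show n-p+1+p = n+1 by omega]; exact hD
              exact tmw_even_ne (a-c)
                (by rw [show 2*(a-c) = n-p by omega]; exact hx)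
        have hA : ¬ (tmw (2*(m/2)+1) = tmw (2*(m/2)+2)) := by
          have := D (2*(m/2)+1) (by omega) (by omega)
          rwa [show 2*(m/2)+1+1 = 2*(m/2)+2 by omega] at this
        have hB : ¬ (tmw (2*(m/2+1)+1) = tmw (2*(m/2+1)+2)) := by
          have := D (2*(m/2+1)+1) (by omega) (by omega)
          rwa [show 2*(m/2+1)+1+1 = 2*(m/2+1)+2 by omega] at this
        rw [tmw_odd_pair] at hA hB
        have o1 := tmw_eq_succ_odd (not_not.mp hA)
        have o2 := tmw_eq_succ_odd (not_not.mp hB)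
        omega

/-- The infinite word obtained from the Thue–Morse sequence by inserting the
letter `2` between consecutive letters is pseudo-cube-free with respect to
`θ = (0,1)·Mir` over `{0,1,2}`. -/
theorem thueMorse_with_twos_pseudoCubeFree
    (f : Fin 3 → Fin 3) (hf0 : f 0 = 1) (hf1 : f 1 = 0) (hf2 : f 2 = 2)
    (θ : List (Fin 3) → List (Fin 3)) (hθ : ∀ v, θ v = (v.map f).reverse)
    (z : ℕ → Fin 3)
    (hzeven : ∀ n : ℕ, z (2 * n) =
      if (Nat.digits 2 n).count 1 % 2 = 1 then 1 else 0)
    (hzodd : ∀ n : ℕ, z (2 * n + 1) = 2) :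
    ¬ ∃ (i : ℕ) (u u₁ u₂ u₃ : List (Fin 3)), u ≠ [] ∧
        (u₁ = u ∨ u₁ = θ u) ∧ (u₂ = u ∨ u₂ = θ u) ∧ (u₃ = u ∨ u₃ = θ u) ∧
        (u₁ ++ u₂ ++ u₃) =
          (List.range (u₁ ++ u₂ ++ u₃).length).map fun j => z (i + j) := by
  rintro ⟨i, u, u₁, u₂, u₃, hune, h1, h2, h3, heq⟩
  have hθlen : ∀ v : List (Fin 3), (θ v).length = v.length := by
    intro v; rw [hθ]; simp
  have l1 : u₁.length = u.length := by
    rcases h1 with h | h <;> rw [h]; exact hθlen u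
  have l2 : u₂.length = u.length := by
    rcases h2 with h | h <;> rw [h]; exact hθlen u
  have l3 : u₃.length = u.length := by
    rcases h3 with h | h <;> rw [h]; exact hθlen u
  set ℓ := u.length with hℓdef
  have hℓpos : 0 < ℓ := List.length_pos_iff.mpr hune
  have hlen : (u₁ ++ u₂ ++ u₃).length = 3*ℓ := by
    simp only [List.length_append, l1, l2, l3]; omega
  have hget : ∀ j, j < 3*ℓ → (u₁++u₂++u₃)[j]? = some (z (i+j)) := by
    intro j hj
    rw [heq, List.getElem?_map, List.getElem?_range (by rw [hlen]; omega)]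
    rfl
  have z2 : ∀ n, z n = 2 ↔ n % 2 = 1 := by
    intro n
    rcases Nat.even_or_odd n with ⟨c, hc⟩ | ⟨c, hc⟩
    · rw [show n = 2*c by omega, hzeven]
      refine iff_of_false ?_ (by omega)
      split <;> decide
    · rw [show n = 2*c+1 by omega, hzodd]
      exact iff_of_true rfl (by omega)
  have f2 : ∀ x : Fin 3, (f x = 2 ↔ x = 2) := by
    intro x
    match x with
    | 0 => rw [hf0]; decide
    | 1 => rw [hf1]; decide
    | 2 => rw [hf2]
  have hu1 : ∀ j, j < ℓ → u₁[j]? = some (z (i+j)) := by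
    intro j hj
    have := hget j (by omega)
    rwa [List.getElem?_append_left (by simp [List.length_append, l1, l2]; omega),
         List.getElem?_append_left (by rw [l1]; omega)] at this
  have hu2 : ∀ j, j < ℓ → u₂[j]? = some (z (i+ℓ+j)) := by
    intro j hj
    have := hget (ℓ+j) (by omega)
    rwa [List.getElem?_append_left (by simp [List.length_append, l1, l2]; omega),
         List.getElem?_append_right (by rw [l1]; omega), l1,
         show ℓ + j - ℓ = j by omega, show i + (ℓ+j) = i+ℓ+j by omega] at this
  have hu3 : ∀ j, j < ℓ → u₃[j]? = some (z (i+2*ℓ+j)) := by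
    intro j hj
    have := hget (2*ℓ+j) (by omega)
    rwa [List.getElem?_append_right (by simp [List.length_append, l1, l2]; omega),
         List.length_append, l1, l2,
         show 2*ℓ + j - (ℓ+ℓ) = j by omega, show i + (2*ℓ+j) = i+2*ℓ+j by omega] at this
  have hθget : ∀ (j k : ℕ), k < ℓ → j + k + 1 = ℓ → (θ u)[j]? = (u[k]?).map f := by
    intro j k hk hs
    rw [hθ, List.getElem?_reverse (by simp; omega), List.length_map,
        show u.length - 1 - j = k by omega, List.getElem?_map]
  have usome : ∀ j (hj : j < ℓ), u[j]? = some (u[j]'(hℓdef ▸ hj)) := fun j hj =>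
    List.getElem?_eq_getElem (hℓdef ▸ hj)
  rcases Nat.even_or_odd ℓ with ⟨s, hs⟩ | ⟨s, hs⟩
  · -- ℓ even
    have hℓ2 : ℓ = 2*s := by omega
    have hs1 : 1 ≤ s := by omega
    have pair : ∀ (a b : List (Fin 3)) (q : ℕ), (a = u ∨ a = θ u) → (b = u ∨ b = θ u) →
        (∀ j, j < ℓ → a[j]? = some (z (q+j))) → (∀ j, j < ℓ → b[j]? = some (z (q+ℓ+j))) →
        ∀ j, j < ℓ → z (q+j) = z (q+ℓ+j) := by
      intro a b q ha hb hA hB j hj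
      rcases ha with rfl | rfl <;> rcases hb with rfl | rfl
      · exact Option.some.inj ((hA j hj).symm.trans (hB j hj))
      · -- a = u, b = θ u : contradiction
        exfalso
        set j₀ := q % 2 with hj₀
        have hj₀ℓ : j₀ < ℓ := by omega
        have hbv := hB j₀ hj₀ℓ
        rw [hθget j₀ (ℓ-1-j₀) (by omega) (by omega), hA (ℓ-1-j₀) (by omega),
            (z2 (q+(ℓ-1-j₀))).mpr (by omega)] at hbv
        simp only [Option.map_some] at hbv
        have : f 2 = z (q+ℓ+j₀) := Option.some.inj hbv
        have h2' : z (q+ℓ+j₀) = 2 := by rw [← this, hf2]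
        have := (z2 _).mp h2'
        omega
      · -- a = θ u, b = u : contradiction
        exfalso
        set j₀ := q % 2 with hj₀
        have hj₀ℓ : j₀ < ℓ := by omega
        have hav := hA j₀ hj₀ℓ
        rw [hθget j₀ (ℓ-1-j₀) (by omega) (by omega), hB (ℓ-1-j₀) (by omega),
            (z2 (q+ℓ+(ℓ-1-j₀))).mpr (by omega)] at hav
        simp only [Option.map_some] at hav
        have : f 2 = z (q+j₀) := Option.some.inj hav
        have h2' : z (q+j₀) = 2 := by rw [← this, hf2]
        have := (z2 _).mp h2'
        omega
      · exact Option.some.inj ((hA j hj).symm.trans (hB j hj))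
    have hper : ∀ j, j < 2*ℓ → z (i+j) = z (i+j+ℓ) := by
      intro j hj
      rcases lt_or_ge j ℓ with hlt | hge
      · have := pair u₁ u₂ i h1 h2 hu1 hu2 j hlt
        rwa [show i+ℓ+j = i+j+ℓ by omega] at this
      · have := pair u₂ u₃ (i+ℓ) h2 h3 hu2
          (fun j hj => by rw [show (i+ℓ)+ℓ+j = i+2*ℓ+j by omega]; exact hu3 j hj)
          (j-ℓ) (by omega)
        rwa [show i+ℓ+(j-ℓ) = i+j by omega, show i+ℓ+ℓ+(j-ℓ) = i+j+ℓ by omega] at this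
    set m := (i+1)/2 with hm
    have hz_tm : ∀ c, z (2*c) = if tmw c then 1 else 0 := by
      intro c
      rw [hzeven]
      by_cases hc : (Nat.digits 2 c).count 1 % 2 = 1 <;> simp [tmw, hc]
    have hover : ∀ a, a ≤ s → tmw (m+a) = tmw (m+a+s) := by
      intro a ha
      have := hper (2*(m+a)-i) (by omega)
      rw [show i+(2*(m+a)-i)+ℓ = 2*(m+a+s) by omega,
          show i+(2*(m+a)-i) = 2*(m+a) by omega, hz_tm, hz_tm] at this
      cases hb1 : tmw (m+a) <;> cases hb2 : tmw (m+a+s) <;>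
        rw [hb1, hb2] at this <;> simp at this <;> rfl
    exact tmw_no_overlap s hs1 m (fun j hj => hover j hj)
  · -- ℓ odd, ℓ = 2s+1
    have hupos : ∀ j, j < ℓ → (u[j]? = some 2 ↔ (i+j) % 2 = 1) := by
      rcases h1 with h1e | h1e
      · intro j hj
        rw [← h1e, hu1 j hj]
        simp only [Option.some.injEq]
        exact z2 _
      · intro j hj
        have hth := hθget (ℓ-1-j) j hj (by omega)
        have hv := hu1 (ℓ-1-j) (by omega)
        rw [h1e, hth] at hv
        constructor
        · intro h2u
          rw [h2u] at hv
          simp only [Option.map_some] at hv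
          have : f 2 = z (i+(ℓ-1-j)) := Option.some.inj hv
          have := (z2 _).mp (by rw [← this, hf2])
          omega
        · intro hpar
          rw [usome j hj] at hv ⊢
          simp only [Option.map_some, Option.some.injEq] at hv ⊢
          have hzv : z (i+(ℓ-1-j)) = 2 := (z2 _).mpr (by omega)
          rw [hzv] at hv
          have := (f2 _).mp hv
          rw [this]
    have hz2' : z (i+ℓ+0) = 2 ↔ i % 2 = 0 := by
      rw [z2]; omega
    rcases h2 with h2e | h2e
    · have ha := hu2 0 hℓpos
      rw [h2e] at ha
      have hb := hupos 0 hℓpos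
      rw [ha] at hb
      simp only [Option.some.injEq] at hb
      rw [hz2'] at hb
      omega
    · have ha := hu2 0 hℓpos
      rw [h2e, hθget 0 (ℓ-1) (by omega) (by omega), usome (ℓ-1) (by omega)] at ha
      simp only [Option.map_some, Option.some.injEq] at ha
      have hb := hupos (ℓ-1) (by omega)
      rw [usome (ℓ-1) (by omega)] at hb
      simp only [Option.some.injEq] at hb
      -- hb : u[ℓ-1] = 2 ↔ (i+(ℓ-1))%2 = 1 ; note (i+(ℓ-1))%2 = i%2 since ℓ-1 even
      by_cases hc : i % 2 = 1
      · have h2u : u[ℓ-1]'(by omega) = 2 := hb.mpr (by omega)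
        rw [h2u, hf2] at ha
        have := (z2 _).mp ha.symm
        omega
      · have hzv : z (i+ℓ+0) = 2 := (z2 _).mpr (by omega)
        rw [hzv] at ha
        have := hb.mp ((f2 _).mp ha)
        omega
end

section
/- Let φ be an antimorphic involution over a 4-letter alphabet {a,b,c,d} with φ(a)=b and φ(c)=d (so Trn(φ)=2). An infinite word w over {a,b,c,d} is pseudo-square-free with respect to φ if and only if w is square-free and w ∈ ((a+b)(c+d))^ω ∪ ((c+d)(a+b))^ω, i.e., the letters of w alternate between the sets {a,b} and {c,d}. -/
private lemma fin4_cases : ∀ x : Fin 4, x = 0 ∨ x = 1 ∨ x = 2 ∨ x = 3 := by decide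

private lemma mem01 (x : Fin 4) : x ∈ ({0, 1} : Set (Fin 4)) ↔ x.val < 2 := by
  simp only [Set.mem_insert_iff, Set.mem_singleton_iff]
  revert x; decide

private lemma mem23 (x : Fin 4) : x ∈ ({2, 3} : Set (Fin 4)) ↔ ¬ x.val < 2 := by
  simp only [Set.mem_insert_iff, Set.mem_singleton_iff]
  revert x; decide

/-- Over the 4-letter alphabet `{a,b,c,d} = {0,1,2,3}` with `φ(0)=1, φ(2)=3`,
an infinite word is pseudo-square-free w.r.t. `φ` iff it is square-free and its
letters alternate between `{0,1}` and `{2,3}`. -/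
theorem pseudoSquareFree_four_letters_iff
    (f : Fin 4 → Fin 4) (hf0 : f 0 = 1) (hf1 : f 1 = 0) (hf2 : f 2 = 3) (hf3 : f 3 = 2)
    (φ : List (Fin 4) → List (Fin 4)) (hφ : ∀ v, φ v = (v.map f).reverse)
    (w : ℕ → Fin 4) :
    (¬ ∃ (i : ℕ) (u : List (Fin 4)), u ≠ [] ∧
        ((u ++ u) = (List.range (u ++ u).length).map (fun j => w (i + j)) ∨
         (u ++ φ u) = (List.range (u ++ φ u).length).map fun j => w (i + j))) ↔
    ((¬ ∃ (i : ℕ) (u : List (Fin 4)), u ≠ [] ∧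
        (u ++ u) = (List.range (u ++ u).length).map fun j => w (i + j)) ∧
      ((∀ n : ℕ, w (2 * n) ∈ ({0, 1} : Set (Fin 4)) ∧
          w (2 * n + 1) ∈ ({2, 3} : Set (Fin 4))) ∨
       (∀ n : ℕ, w (2 * n) ∈ ({2, 3} : Set (Fin 4)) ∧
          w (2 * n + 1) ∈ ({0, 1} : Set (Fin 4))))) := by
  have hfpres : ∀ x : Fin 4, ((f x).val < 2 ↔ x.val < 2) := by
    intro x
    rcases fin4_cases x with h | h | h | h <;> rw [h] <;>
      simp only [hf0, hf1, hf2, hf3] <;> decide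
  constructor
  · intro h
    -- adjacent letters are in different classes
    have adj : ∀ i, ((w i).val < 2 ↔ ¬ (w (i+1)).val < 2) := by
      intro i
      have key : ∀ (y : Fin 4), (((w i).val < 2 ∧ y.val < 2) ∨
          (¬ (w i).val < 2 ∧ ¬ y.val < 2)) → y = w i ∨ y = f (w i) := by
        intro y hy
        rcases fin4_cases (w i) with h1 | h1 | h1 | h1 <;>
          rcases fin4_cases y with h2 | h2 | h2 | h2 <;>
          simp only [h1, h2, hf0, hf1, hf2, hf3] at hy ⊢ <;>
          revert hy <;> decide
      have main : ¬ (((w i).val < 2 ∧ (w (i+1)).val < 2) ∨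
          (¬ (w i).val < 2 ∧ ¬ (w (i+1)).val < 2)) := by
        intro hc
        have hk := key (w (i+1)) hc
        apply h
        refine ⟨i, [w i], by simp, ?_⟩
        rcases hk with he | he
        · left
          show [w i, w i] = [w (i + 0), w (i + 1)]
          simp [he]
        · right
          rw [hφ]
          show [w i, f (w i)] = [w (i + 0), w (i + 1)]
          simp [he]
      tauto
    refine ⟨fun ⟨i, u, hu, he⟩ => h ⟨i, u, hu, Or.inl he⟩, ?_⟩
    by_cases h0 : (w 0).val < 2
    · left
      intro n
      rw [mem01, mem23]
      induction n with
      | zero => exact ⟨h0, (adj 0).mp h0⟩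
      | succ n ih =>
        rw [show 2 * (n + 1) = 2 * n + 1 + 1 from by ring]
        have h1 : (w (2 * n + 1 + 1)).val < 2 := by
          have := adj (2 * n + 1); tauto
        exact ⟨h1, (adj _).mp h1⟩
    · right
      intro n
      rw [mem01, mem23]
      induction n with
      | zero => refine ⟨h0, ?_⟩; have := adj 0; tauto
      | succ n ih =>
        rw [show 2 * (n + 1) = 2 * n + 1 + 1 from by ring]
        have h1 : ¬ (w (2 * n + 1 + 1)).val < 2 := by
          have := adj (2 * n + 1); tauto
        refine ⟨h1, ?_⟩
        have := adj (2 * n + 1 + 1); tauto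
  · rintro ⟨hsq, halt⟩ ⟨i, u, hu, hc | hc⟩
    · exact hsq ⟨i, u, hu, hc⟩
    · -- alternation gives: adjacent letters in different classes
      have adj : ∀ m, ¬ ((w m).val < 2 ↔ (w (m+1)).val < 2) := by
        intro m
        rcases Nat.even_or_odd m with ⟨k, hk⟩ | ⟨k, hk⟩
        · subst hk
          rw [show k + k = 2 * k from by ring]
          rcases halt with hA | hA
          · have h1 := (mem01 _).mp (hA k).1
            have h2 := (mem23 _).mp (hA k).2
            tauto
          · have h1 := (mem23 _).mp (hA k).1
            have h2 := (mem01 _).mp (hA k).2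
            tauto
        · subst hk
          rw [show 2 * k + 1 + 1 = 2 * (k + 1) from by ring]
          rcases halt with hA | hA
          · have h1 := (mem23 _).mp (hA k).2
            have h2 := (mem01 _).mp (hA (k+1)).1
            tauto
          · have h1 := (mem01 _).mp (hA k).2
            have h2 := (mem23 _).mp (hA (k+1)).1
            tauto
      rw [hφ] at hc
      have hn1 : 1 ≤ u.length := List.length_pos_iff.mpr hu
      have hlen : (u ++ (u.map f).reverse).length = u.length + u.length := by simp
      have hpt : ∀ k, (hk : k < (u ++ (u.map f).reverse).length) →
          (u ++ (u.map f).reverse)[k] = w (i + k) := by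
        intro k hk
        rw [List.getElem_of_eq hc hk]
        simp
      have hA : w (i + (u.length - 1)) = u[u.length - 1]'(by omega) := by
        rw [← hpt (u.length - 1) (by rw [hlen]; omega)]
        rw [List.getElem_append_left (by omega)]
      have hB : w (i + u.length) = f (u[u.length - 1]'(by omega)) := by
        rw [← hpt u.length (by rw [hlen]; omega)]
        rw [List.getElem_append_right (by omega)]
        rw [List.getElem_reverse]
        rw [List.getElem_map]
        congr 1
        simp
      have e3 : i + u.length = (i + (u.length - 1)) + 1 := by omega
      have hadj := adj (i + (u.length - 1))
      rw [← e3, hB, hA] at hadj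
      exact hadj (hfpres _).symm
end
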